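/- arXiv:1202.3871 — 4 statements merged into one kernel-verified Lean document; each statement's English description precedes it below -/
import Mathlib

section
/- Let f ∈ ℚ[[x]] be a formal power series with zero constant coefficient satisfying the functional equation (f − x·f′) ∘ (x·e^x) = e^x − x·e^x − 1, where ∘ denotes substitution of the power series x·e^x (which has zero constant term) into f − x·f′, f′ is the formal derivative of f, and e^x = exp(x) is the formal exponential series. Then for every n ≥ 2, the coefficient of x^n in f equals (−1)^n (n−1)^{n−2} / n!. -/
/-!
Formal power series over `ℚ`.  `psubst g f` is the substitution `f ∘ g` of a power
series `g` with zero constant coefficient into `f` (defined coefficientwise; when the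
constant coefficient of `g` vanishes, `coeff n (g ^ k) = 0` for `k > n`, so the finite
sum below is the usual substitution).

STATEMENT: if `f ∈ ℚ[[x]]` has zero constant coefficient and satisfies
`(f - x·f') ∘ (x·eˣ) = eˣ - x·eˣ - 1`, then for all `n ≥ 2` the coefficient of `xⁿ`
in `f` is `(-1)ⁿ (n-1)^(n-2) / n!`.
-/

/-- Substitution of the power series `g` (with zero constant coefficient) into `f`. -/
noncomputable def psubst (g f : PowerSeries ℚ) : PowerSeries ℚ :=
  PowerSeries.mk fun n =>
    ∑ k ∈ Finset.range (n + 1), PowerSeries.coeff k f * PowerSeries.coeff n (g ^ k)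


section AbelIdentity

open Finset Polynomial

lemma alt_sum_zero : ∀ j n : ℕ, j < n →
    ∑ k ∈ range (n+1), (-1:ℚ)^k * n.choose k * (k:ℚ)^j = 0 := by
  intro j
  induction j using Nat.strong_induction_on with
  | _ j IH =>
    intro n hjn
    match j with
    | 0 =>
      simp only [pow_zero, mul_one]
      have h := Int.alternating_sum_range_choose_of_ne (n := n) (by omega)
      have h2 : ((∑ i ∈ range (n + 1), (-1:ℤ) ^ i * n.choose i : ℤ) : ℚ) = 0 := by
        rw [h]; norm_num
      push_cast at h2
      exact h2
    | (i+1) =>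
      obtain ⟨m, rfl⟩ : ∃ m, n = m + 1 := ⟨n - 1, by omega⟩
      rw [Finset.sum_range_succ']
      simp only [Nat.cast_zero, zero_pow (Nat.succ_ne_zero i), mul_zero, add_zero]
      have key : ∀ l, (-1:ℚ)^(l+1) * ((m+1).choose (l+1)) * ((l+1:ℕ):ℚ)^(i+1)
          = -((m+1:ℚ)) * ((-1:ℚ)^l * (m.choose l) * ((l:ℚ)+1)^i) := by
        intro l
        have h := Nat.add_one_mul_choose_eq m l
        have h2 : ((m+1).choose (l+1) : ℚ) * ((l:ℚ)+1) = (m+1 : ℚ) * m.choose l := by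
          have := congrArg (Nat.cast : ℕ → ℚ) h
          push_cast at this
          linarith [this]
        push_cast
        calc (-1:ℚ)^(l+1) * (m+1).choose (l+1) * ((l:ℚ)+1)^(i+1)
            = (-1:ℚ)^(l+1) * (((m+1).choose (l+1) : ℚ) * ((l:ℚ)+1)) * ((l:ℚ)+1)^i := by ring
          _ = (-1:ℚ)^(l+1) * ((m+1:ℚ) * m.choose l) * ((l:ℚ)+1)^i := by rw [h2]
          _ = -((m+1:ℚ)) * ((-1:ℚ)^l * (m.choose l) * ((l:ℚ)+1)^i) := by ring
      rw [Finset.sum_congr rfl (fun l _ => key l), ← Finset.mul_sum]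
      have hinner : ∑ l ∈ range (m+1), (-1:ℚ)^l * (m.choose l) * ((l:ℚ)+1)^i = 0 := by
        have expand : ∀ l ∈ range (m+1), (-1:ℚ)^l * (m.choose l) * ((l:ℚ)+1)^i
            = ∑ t ∈ range (i+1), (i.choose t : ℚ) * ((-1:ℚ)^l * (m.choose l) * (l:ℚ)^t) := by
          intro l _
          rw [add_pow]
          rw [Finset.mul_sum]
          apply Finset.sum_congr rfl
          intro t _
          simp only [one_pow, mul_one]
          ring
        rw [Finset.sum_congr rfl expand, Finset.sum_comm]
        apply Finset.sum_eq_zero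
        intro t ht
        rw [← Finset.mul_sum, IH t (by simp at ht; omega) m (by simp at ht; omega), mul_zero]
      rw [hinner, mul_zero]

-- alternating sum against (k-1)^(n-1)
lemma alt_sum_zero' (n : ℕ) (hn : 1 ≤ n) :
    ∑ k ∈ range (n+1), (-1:ℚ)^k * n.choose k * ((k:ℚ)-1)^(n-1) = 0 := by
  have expand : ∀ k ∈ range (n+1), (-1:ℚ)^k * n.choose k * ((k:ℚ)-1)^(n-1)
      = ∑ t ∈ range n, ((n-1).choose t : ℚ) * (-1:ℚ)^(n-1-t) *
          ((-1:ℚ)^k * n.choose k * (k:ℚ)^t) := by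
    intro k _
    have : ((k:ℚ)-1)^(n-1) = ∑ t ∈ range ((n-1)+1), (k:ℚ)^t * (-1:ℚ)^(n-1-t) * ((n-1).choose t) := by
      have := add_pow (k:ℚ) (-1:ℚ) (n-1)
      rw [sub_eq_add_neg]
      simpa using this
    rw [show (n-1)+1 = n by omega] at this
    rw [this, Finset.mul_sum]
    apply Finset.sum_congr rfl
    intro t _
    ring
  rw [Finset.sum_congr rfl expand, Finset.sum_comm]
  apply Finset.sum_eq_zero
  intro t ht
  rw [← Finset.mul_sum, alt_sum_zero t n (by simp at ht; omega), mul_zero]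

noncomputable def bPoly (n : ℕ) : Polynomial ℚ :=
  ∑ k ∈ Finset.Icc 1 n, C ((n.choose k : ℚ) * ((k:ℚ)-1)^(k-1)) * (X - C (k:ℚ))^(n-k)

lemma bPoly_deriv (m : ℕ) :
    derivative (bPoly (m+1)) = C ((m:ℚ)+1) * bPoly m := by
  rw [bPoly, map_sum]
  have step : ∀ k ∈ Finset.Icc 1 (m+1),
      derivative (C (((m+1).choose k : ℚ) * ((k:ℚ)-1)^(k-1)) * (X - C (k:ℚ))^(m+1-k))
      = if k ≤ m then C ((m:ℚ)+1) * (C ((m.choose k : ℚ) * ((k:ℚ)-1)^(k-1)) * (X - C (k:ℚ))^(m-k)) else 0 := by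
    intro k hk
    simp only [Finset.mem_Icc] at hk
    rw [derivative_C_mul, derivative_pow, derivative_sub, derivative_X, derivative_C, sub_zero,
      mul_one]
    by_cases h : k ≤ m
    · rw [if_pos h]
      have hc : ((m+1-k : ℕ) : ℚ) * ((m+1).choose k : ℚ) = ((m:ℚ)+1) * (m.choose k : ℚ) := by
        have := Nat.choose_mul_succ_eq m k
        have h2 := congrArg (Nat.cast : ℕ → ℚ) this
        push_cast [show m+1-k = m-k+1 by omega] at h2 ⊢
        push_cast [show m+1-k = m-k+1 by omega]
        linarith [h2]
      rw [show m+1-k-1 = m-k by omega]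
      rw [← mul_assoc, ← mul_assoc, ← C_mul, ← C_mul]
      congr 1
      rw [C_inj]
      linear_combination ((k:ℚ)-1)^(k-1) * hc
    · rw [if_neg h, show m+1-k = 0 by omega]
      simp
  rw [Finset.sum_congr rfl step]
  rw [Finset.sum_ite, Finset.sum_const_zero, add_zero]
  rw [← Finset.mul_sum]
  congr 1
  rw [bPoly]
  apply Finset.sum_congr
  · ext k; simp [Finset.mem_filter, Finset.mem_Icc]; omega
  · intros; rfl

lemma bPoly_eval_one (n : ℕ) (hn : 2 ≤ n) : (bPoly n).eval 1 = 1 := by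
  rw [bPoly, eval_finset_sum]
  simp only [eval_mul, eval_C, eval_pow, eval_sub, eval_X]
  have hsplit : Finset.Icc 1 n = insert 1 (Finset.Icc 2 n) := by
    ext x; simp [Finset.mem_Icc, Finset.mem_insert]; omega
  rw [hsplit, Finset.sum_insert (by simp [Finset.mem_Icc])]
  have h1 : (n.choose 1 : ℚ) * (((1:ℕ):ℚ)-1)^(1-1) * ((1:ℚ) - ((1:ℕ):ℚ))^(n-1) = 0 := by
    have : ((1:ℚ) - ((1:ℕ):ℚ))^(n-1) = 0 := by
      rw [show ((1:ℕ):ℚ) = 1 by norm_num, sub_self, zero_pow (by omega)]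
    rw [this, mul_zero]
  rw [h1, zero_add]
  -- now the Icc 2 n part
  have hA := alt_sum_zero' n (by omega)
  have hrange : range (n+1) = insert 0 (insert 1 (Finset.Icc 2 n)) := by
    ext x; simp [Finset.mem_Icc, Finset.mem_insert, Finset.mem_range]; omega
  rw [hrange, Finset.sum_insert (by simp [Finset.mem_Icc]),
    Finset.sum_insert (by simp [Finset.mem_Icc])] at hA
  have h0 : (-1:ℚ)^0 * n.choose 0 * (((0:ℕ):ℚ)-1)^(n-1) = (-1:ℚ)^(n-1) := by
    simp
  have h1' : (-1:ℚ)^1 * n.choose 1 * (((1:ℕ):ℚ)-1)^(n-1) = 0 := by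
    rw [show ((1:ℕ):ℚ) = 1 by norm_num, sub_self, zero_pow (by omega), mul_zero]
  rw [h0, h1', zero_add] at hA
  -- hA : (-1)^(n-1) + Σ_{Icc 2 n} (-1)^k C(n,k)(k-1)^(n-1) = 0
  have hsum : ∑ k ∈ Finset.Icc 2 n, (-1:ℚ)^k * n.choose k * ((k:ℚ)-1)^(n-1) = -(-1:ℚ)^(n-1) := by
    linarith [hA]
  have hterm : ∀ k ∈ Finset.Icc 2 n, (n.choose k : ℚ) * ((k:ℚ)-1)^(k-1) * ((1:ℚ)-(k:ℚ))^(n-k)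
      = (-1:ℚ)^n * ((-1:ℚ)^k * n.choose k * ((k:ℚ)-1)^(n-1)) := by
    intro k hk
    simp only [Finset.mem_Icc] at hk
    have e1 : ((1:ℚ)-(k:ℚ))^(n-k) = (-1:ℚ)^(n-k) * ((k:ℚ)-1)^(n-k) := by
      rw [← neg_sub, neg_pow]
    have e2 : ((k:ℚ)-1)^(k-1) * ((k:ℚ)-1)^(n-k) = ((k:ℚ)-1)^(n-1) := by
      rw [← pow_add]; congr 1; omega
    have e4 : (-1:ℚ)^(n+k) = (-1:ℚ)^(n-k) := by
      rw [show n+k = (n-k) + 2*k by omega, pow_add, pow_mul]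
      norm_num
    calc (n.choose k : ℚ) * ((k:ℚ)-1)^(k-1) * ((1:ℚ)-(k:ℚ))^(n-k)
        = (n.choose k : ℚ) * (((k:ℚ)-1)^(k-1) * ((k:ℚ)-1)^(n-k)) * (-1:ℚ)^(n-k) := by
          rw [e1]; ring
      _ = (n.choose k : ℚ) * ((k:ℚ)-1)^(n-1) * (-1:ℚ)^(n-k) := by rw [e2]
      _ = (-1:ℚ)^n * ((-1:ℚ)^k * n.choose k * ((k:ℚ)-1)^(n-1)) := by
          rw [← e4, pow_add]; ring
  rw [Finset.sum_congr rfl hterm, ← Finset.mul_sum, hsum]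
  have hsq : (-1:ℚ)^(n-1) * (-1:ℚ)^(n-1) = 1 := by rw [← mul_pow]; norm_num
  have h5 : (-1:ℚ)^n = (-1:ℚ)^(n-1) * (-1) := by
    conv_lhs => rw [show n = (n-1)+1 by omega, pow_succ]
  rw [h5]
  linear_combination hsq

lemma bPoly_eq (n : ℕ) (hn : 1 ≤ n) : bPoly n = X^n - (X - C 1)^n := by
  induction n with
  | zero => omega
  | succ m IH =>
    by_cases hm : m = 0
    · subst hm
      rw [bPoly]
      simp only [Finset.Icc_self, Finset.sum_singleton]
      norm_num
    · have h1m : 1 ≤ m := by omega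
      have hd : derivative (bPoly (m+1) - (X^(m+1) - (X - C 1)^(m+1))) = 0 := by
        rw [derivative_sub, bPoly_deriv, IH h1m, derivative_sub, derivative_pow, derivative_pow,
          derivative_X, derivative_sub, derivative_X, derivative_C]
        push_cast
        ring
      have hc := eq_C_of_derivative_eq_zero hd
      have he : (bPoly (m+1) - (X^(m+1) - (X - C 1)^(m+1))).eval 1 = 0 := by
        rw [eval_sub, bPoly_eval_one (m+1) (by omega)]
        simp
      rw [hc, eval_C] at he
      rw [he, map_zero] at hc
      exact sub_eq_zero.mp hc

lemma key_ident (n : ℕ) (hn : 2 ≤ n) :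
    ∑ k ∈ Finset.Icc 2 n, (-1:ℚ)^(k-1) * n.choose k * ((k:ℚ)-1)^(k-1) * (k:ℚ)^(n-k)
      = 1 - n := by
  have h := congrArg (Polynomial.eval (0:ℚ)) (bPoly_eq n (by omega))
  rw [bPoly, eval_finset_sum] at h
  simp only [eval_mul, eval_C, eval_pow, eval_sub, eval_X, eval_one] at h
  rw [zero_pow (by omega : n ≠ 0)] at h
  have hsplit : Finset.Icc 1 n = insert 1 (Finset.Icc 2 n) := by
    ext x; simp [Finset.mem_Icc, Finset.mem_insert]; omega
  rw [hsplit, Finset.sum_insert (by simp [Finset.mem_Icc])] at h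
  have h1 : (n.choose 1 : ℚ) * (((1:ℕ):ℚ)-1)^(1-1) * ((0:ℚ) - ((1:ℕ):ℚ))^(n-1)
      = (n:ℚ) * (-1:ℚ)^(n-1) := by
    simp
  rw [h1] at h
  -- h : n * (-1)^(n-1) + T = 0 - (0-1)^n
  have hterm : ∀ k ∈ Finset.Icc 2 n,
      (-1:ℚ)^(k-1) * n.choose k * ((k:ℚ)-1)^(k-1) * (k:ℚ)^(n-k)
      = (-(-1:ℚ)^n) * ((n.choose k : ℚ) * ((k:ℚ)-1)^(k-1) * ((0:ℚ)-(k:ℚ))^(n-k)) := by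
    intro k hk
    simp only [Finset.mem_Icc] at hk
    have ha : -((-1:ℚ)^n * (-1:ℚ)^(n-k)) = (-1:ℚ)^(k-1) := by
      rw [← pow_add, show n + (n-k) = (k-1) + (2*(n-k)+1) by omega, pow_add, pow_succ, pow_mul]
      norm_num
    have hb : ((0:ℚ)-(k:ℚ))^(n-k) = (-1:ℚ)^(n-k) * (k:ℚ)^(n-k) := by
      rw [zero_sub, neg_pow]
    rw [hb, ← ha]
    ring
  rw [Finset.sum_congr rfl hterm, ← Finset.mul_sum]
  have hsq : (-1:ℚ)^n * (-1:ℚ)^n = 1 := by rw [← mul_pow]; norm_num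
  have hmix : (-1:ℚ)^n * (-1:ℚ)^(n-1) = -1 := by
    rw [← pow_add, show n + (n-1) = 2*(n-1)+1 by omega, pow_succ, pow_mul]
    norm_num
  have hc : ((0:ℚ)-1)^n = (-1:ℚ)^n := by norm_num
  rw [hc] at h
  linear_combination (-(-1:ℚ)^n) * h + hsq + (n:ℚ) * hmix

end AbelIdentity

section Main

open Finset PowerSeries

lemma coeff_Xexp_pow (n k : ℕ) (h : k ≤ n) :
    PowerSeries.coeff n ((X * exp ℚ) ^ k) = (k:ℚ)^(n-k) / (n-k).factorial := by
  rw [mul_pow, exp_pow_eq_rescale_exp, show n = (n-k) + k by omega, coeff_X_pow_mul,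
    coeff_rescale, coeff_exp]
  simp [div_eq_mul_inv]

theorem coeff_of_functional_equation (f : PowerSeries ℚ)
    (hf : PowerSeries.constantCoeff f = 0)
    (heq : psubst (PowerSeries.X * PowerSeries.exp ℚ)
        (f - PowerSeries.X * PowerSeries.derivativeFun f)
      = PowerSeries.exp ℚ - PowerSeries.X * PowerSeries.exp ℚ - 1) :
    ∀ n : ℕ, 2 ≤ n →
      PowerSeries.coeff n f = (-1) ^ n * ((n : ℚ) - 1) ^ (n - 2) / n.factorial := by
  set a : ℕ → ℚ := fun k => PowerSeries.coeff k f with ha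
  have hcoeff : ∀ k : ℕ, PowerSeries.coeff k (f - X * derivativeFun f)
      = (1 - (k:ℚ)) * a k := by
    intro k
    rw [map_sub]
    match k with
    | 0 =>
      have h0 : PowerSeries.coeff 0 (X * derivativeFun f) = 0 := by
        rw [coeff_zero_eq_constantCoeff_apply, map_mul, constantCoeff_X, zero_mul]
      rw [h0]
      norm_num [ha]
    | (m+1) =>
      rw [coeff_succ_X_mul, show derivativeFun f = derivative ℚ f from rfl, coeff_derivative]
      push_cast
      ring
  -- the coefficient-wise equation
  have E : ∀ n : ℕ, 2 ≤ n →
      ∑ k ∈ Finset.range (n+1), (1 - (k:ℚ)) * a k * ((k:ℚ)^(n-k) / (n-k).factorial)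
        = 1 / n.factorial - 1 / (n-1).factorial := by
    intro n hn
    have hE := congrArg (PowerSeries.coeff n) heq
    rw [psubst, coeff_mk] at hE
    have hL : ∑ k ∈ Finset.range (n + 1),
        PowerSeries.coeff k (f - X * derivativeFun f) * PowerSeries.coeff n ((X * exp ℚ) ^ k)
        = ∑ k ∈ Finset.range (n+1), (1 - (k:ℚ)) * a k * ((k:ℚ)^(n-k) / (n-k).factorial) := by
      apply Finset.sum_congr rfl
      intro k hk
      rw [hcoeff k, coeff_Xexp_pow n k (by simp at hk; omega)]
    have hR : PowerSeries.coeff n (exp ℚ - X * exp ℚ - 1 : PowerSeries ℚ)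
        = 1 / n.factorial - 1 / (n-1).factorial := by
      rw [map_sub, map_sub, coeff_exp, PowerSeries.coeff_one, if_neg (by omega)]
      rw [show n = (n-1)+1 by omega, coeff_succ_X_mul, coeff_exp]
      simp [show (n-1)+1-1 = n-1 by omega]
    rw [hL, hR] at hE
    exact hE
  -- the explicit candidate coefficients
  set b : ℕ → ℚ := fun k => (-1)^k * ((k:ℚ)-1)^(k-2) / k.factorial with hb
  -- the identity: b satisfies the same relation
  have ID : ∀ n : ℕ, 2 ≤ n →
      ∑ k ∈ Finset.Icc 2 n, (1 - (k:ℚ)) * b k * ((k:ℚ)^(n-k) / (n-k).factorial)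
        = 1 / n.factorial - 1 / (n-1).factorial := by
    intro n hn
    have hterm : ∀ k ∈ Finset.Icc 2 n,
        (1 - (k:ℚ)) * b k * ((k:ℚ)^(n-k) / (n-k).factorial)
        = ((-1:ℚ)^(k-1) * n.choose k * ((k:ℚ)-1)^(k-1) * (k:ℚ)^(n-k)) / n.factorial := by
      intro k hk
      simp only [Finset.mem_Icc] at hk
      have hfac : (n.choose k : ℚ) * (k.factorial : ℚ) * ((n-k).factorial : ℚ)
          = (n.factorial : ℚ) := by
        exact_mod_cast congrArg (Nat.cast : ℕ → ℚ) (Nat.choose_mul_factorial_mul_factorial hk.2)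
      have hneg : (-1:ℚ)^k = (-1:ℚ)^(k-1) * (-1) := by
        conv_lhs => rw [show k = (k-1)+1 by omega, pow_succ]
      have hneg2 : (-1:ℚ)^(k-1) = -(-1:ℚ)^k := by rw [hneg]; ring
      have hp : ((k:ℚ)-1)^(k-1) = ((k:ℚ)-1)^(k-2) * ((k:ℚ)-1) := by
        rw [← pow_succ]; congr 1; omega
      have hk0 : (k.factorial : ℚ) ≠ 0 := by exact_mod_cast k.factorial_ne_zero
      have hnk0 : ((n-k).factorial : ℚ) ≠ 0 := by exact_mod_cast (n-k).factorial_ne_zero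
      have hn0 : (n.factorial : ℚ) ≠ 0 := by exact_mod_cast n.factorial_ne_zero
      rw [hb]
      simp only
      rw [hneg2, hp]
      field_simp
      linear_combination ((k:ℚ)^(n-k) * ((k:ℚ)-1)^(k-2) * ((k:ℚ)-1)) * hfac
    rw [Finset.sum_congr rfl hterm, ← Finset.sum_div, key_ident n hn]
    have hfs : (n.factorial : ℚ) = (n:ℚ) * (n-1).factorial := by
      conv_lhs => rw [show n = (n-1)+1 by omega, Nat.factorial_succ]
      push_cast [show n-1+1 = n by omega]
      ring
    have hn0 : (n.factorial : ℚ) ≠ 0 := by exact_mod_cast n.factorial_ne_zero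
    have hn10 : ((n-1).factorial : ℚ) ≠ 0 := by exact_mod_cast (n-1).factorial_ne_zero
    have hnne : (n:ℚ) ≠ 0 := by
      have : (2:ℚ) ≤ (n:ℚ) := by exact_mod_cast hn
      linarith
    rw [hfs]
    field_simp
  -- strong induction
  intro n
  induction n using Nat.strong_induction_on with
  | _ n IH =>
    intro hn
    have hE := E n hn
    have hID := ID n hn
    have hsplit : Finset.range (n+1) = insert 0 (insert 1 (insert n (Finset.Icc 2 (n-1)))) := by
      ext x; simp only [Finset.mem_range, Finset.mem_insert, Finset.mem_Icc]; omega
    rw [hsplit, Finset.sum_insert (by simp [Finset.mem_Icc]; omega),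
      Finset.sum_insert (by simp [Finset.mem_Icc]; omega),
      Finset.sum_insert (by simp [Finset.mem_Icc]; omega)] at hE
    have hsplit2 : Finset.Icc 2 n = insert n (Finset.Icc 2 (n-1)) := by
      ext x; simp only [Finset.mem_insert, Finset.mem_Icc]; omega
    rw [hsplit2, Finset.sum_insert (by simp [Finset.mem_Icc]; omega)] at hID
    -- identify middle sums using IH
    have hmid : ∑ k ∈ Finset.Icc 2 (n-1), (1 - (k:ℚ)) * a k * ((k:ℚ)^(n-k) / (n-k).factorial)
        = ∑ k ∈ Finset.Icc 2 (n-1), (1 - (k:ℚ)) * b k * ((k:ℚ)^(n-k) / (n-k).factorial) := by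
      apply Finset.sum_congr rfl
      intro k hk
      simp only [Finset.mem_Icc] at hk
      have hik := IH k (by omega) (by omega)
      simp only [ha, hb]
      rw [hik]
    -- simplify the 0, 1, n terms of hE
    have t0 : (1 - ((0:ℕ):ℚ)) * a 0 * (((0:ℕ):ℚ)^(n-0) / (n-0).factorial) = 0 := by
      rw [Nat.cast_zero, zero_pow (by omega : n - 0 ≠ 0)]
      ring
    have t1 : (1 - ((1:ℕ):ℚ)) * a 1 * (((1:ℕ):ℚ)^(n-1) / (n-1).factorial) = 0 := by
      norm_num
    rw [t0, t1, zero_add, zero_add] at hE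
    have tn : ∀ c : ℕ → ℚ, (1 - (n:ℚ)) * c n * ((n:ℚ)^(n-n) / (n-n).factorial)
        = (1 - (n:ℚ)) * c n := by
      intro c
      rw [Nat.sub_self, pow_zero, Nat.factorial_zero]
      norm_num
    rw [tn a] at hE
    rw [tn b] at hID
    rw [hmid] at hE
    have hcancel : (1 - (n:ℚ)) * a n = (1 - (n:ℚ)) * b n := by linarith [hE, hID]
    have hne : (1 - (n:ℚ)) ≠ 0 := by
      have : (2:ℚ) ≤ (n:ℚ) := by exact_mod_cast hn
      intro hcontra; rw [sub_eq_zero] at hcontra; rw [← hcontra] at this; linarith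
    have := mul_left_cancel₀ hne hcancel
    rw [ha] at this
    simp only at this
    rw [this, hb]

end Main
end

section
/- Let ΣW = Σ_{n≥1} (−1)^{n−1} n^{n−1} x^n/n! ∈ ℚ[[x]]. Then exp(ΣW) − x − 1 = Σ_{n≥2} (−1)^{n−1} (n−1)^{n−1} x^n/n!; that is, exp(ΣW) has constant coefficient 1, coefficient of x equal to 1, and for every n ≥ 2 its coefficient of x^n equals (−1)^{n−1} (n−1)^{n−1}/n!. -/
/-- `ΣW = Σ_{n≥1} (-1)^(n-1) n^(n-1) xⁿ/n!`. -/
noncomputable def SW : PowerSeries ℚ :=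
  PowerSeries.mk fun n =>
    if n = 0 then 0 else (-1) ^ (n - 1) * (n : ℚ) ^ (n - 1) / n.factorial

section PS1
open PowerSeries Finset

lemma coeff_pow_zero_of_lt {f : PowerSeries ℚ} (hf : constantCoeff f = 0) :
    ∀ k d, d < k → coeff d (f ^ k) = 0 := by
  intro k
  induction k with
  | zero => intro d hd; omega
  | succ k ih =>
    intro d hd
    rw [pow_succ, coeff_mul]
    apply Finset.sum_eq_zero
    intro p hp
    rw [Finset.HasAntidiagonal.mem_antidiagonal] at hp
    by_cases h2 : p.2 = 0
    · rw [h2, coeff_zero_eq_constantCoeff, hf, mul_zero]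
    · have : p.1 < k := by omega
      rw [ih p.1 this, zero_mul]

lemma constantCoeff_SW : constantCoeff SW = 0 := by
  rw [← coeff_zero_eq_constantCoeff, SW, coeff_mk]; simp

lemma coeff_psubst_exp (n : ℕ) :
    coeff n (psubst SW (exp ℚ)) =
      ∑ k ∈ range (n + 1), ((k.factorial : ℚ))⁻¹ * coeff n (SW ^ k) := by
  rw [psubst, coeff_mk]
  refine Finset.sum_congr rfl fun k _ => ?_
  rw [coeff_exp]
  simp [one_div]

lemma c_rec (n : ℕ) :
    ((n:ℚ)+1) * coeff (n+1) (psubst SW (exp ℚ))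
      = ∑ j ∈ range (n+1),
          (coeff (j+1) SW * ((j:ℚ)+1)) * coeff (n-j) (psubst SW (exp ℚ)) := by
  rw [coeff_psubst_exp, Finset.mul_sum]
  have step1 : ∀ k, ((n:ℚ)+1) * (((k.factorial : ℚ))⁻¹ * coeff (n+1) (SW ^ k))
      = ((k.factorial : ℚ))⁻¹ * coeff n ((d⁄dX ℚ) (SW ^ k)) := by
    intro k
    rw [coeff_derivative]
    ring
  rw [Finset.sum_congr rfl fun k _ => step1 k]
  rw [Finset.sum_range_succ']
  have h0 : ((Nat.factorial 0 : ℚ))⁻¹ * coeff n ((d⁄dX ℚ) (SW ^ 0)) = 0 := by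
    simp
  rw [h0, add_zero]
  have step2 : ∀ k, (((k+1).factorial : ℚ))⁻¹ * coeff n ((d⁄dX ℚ) (SW ^ (k+1)))
      = ((k.factorial : ℚ))⁻¹ * coeff n (SW ^ k * (d⁄dX ℚ) SW) := by
    intro k
    rw [Derivation.leibniz_pow]
    have hc : coeff n ((k+1) • SW ^ (k+1-1) • (d⁄dX ℚ) SW)
        = ((k:ℚ)+1) * coeff n (SW ^ k * (d⁄dX ℚ) SW) := by
      rw [Nat.add_sub_cancel, smul_eq_mul, map_nsmul, nsmul_eq_mul]
      push_cast
      ring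
    rw [hc, Nat.factorial_succ]
    have hk : ((k:ℚ)+1) ≠ 0 := by positivity
    have hf : ((k.factorial:ℚ)) ≠ 0 := Nat.cast_ne_zero.2 k.factorial_ne_zero
    field_simp
    push_cast; ring
  rw [Finset.sum_congr rfl fun k _ => step2 k]
  have step3 : ∀ k, ((k.factorial : ℚ))⁻¹ * coeff n (SW ^ k * (d⁄dX ℚ) SW)
      = ∑ i ∈ range (n+1), ((k.factorial : ℚ))⁻¹ * (coeff i (SW ^ k) * coeff (n-i) ((d⁄dX ℚ) SW)) := by
    intro k
    rw [coeff_mul, Finset.Nat.sum_antidiagonal_eq_sum_range_succ_mk, Finset.mul_sum]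
  rw [Finset.sum_congr rfl fun k _ => step3 k]
  rw [Finset.sum_comm]
  have step4 : ∀ i ∈ range (n+1),
      ∑ k ∈ range (n+1), ((k.factorial : ℚ))⁻¹ * (coeff i (SW ^ k) * coeff (n-i) ((d⁄dX ℚ) SW))
      = coeff i (psubst SW (exp ℚ)) * coeff (n-i) ((d⁄dX ℚ) SW) := by
    intro i hi
    rw [mem_range] at hi
    have hassoc : ∀ k, ((k.factorial : ℚ))⁻¹ * (coeff i (SW ^ k) * coeff (n-i) ((d⁄dX ℚ) SW))
        = (((k.factorial : ℚ))⁻¹ * coeff i (SW ^ k)) * coeff (n-i) ((d⁄dX ℚ) SW) :=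
      fun k => by ring
    rw [Finset.sum_congr rfl fun k _ => hassoc k, ← Finset.sum_mul, coeff_psubst_exp]
    congr 1
    symm
    apply Finset.sum_subset (Finset.range_subset_range.2 (by omega))
    intro k hk hk2
    rw [mem_range] at hk hk2
    rw [coeff_pow_zero_of_lt constantCoeff_SW k i (by omega), mul_zero]
  rw [Finset.sum_congr rfl step4]
  rw [← Finset.sum_range_reflect]
  simp only [Nat.add_sub_cancel]
  refine Finset.sum_congr rfl fun j hj => ?_
  rw [mem_range] at hj
  have h1 : n - (n - j) = j := by omega
  rw [coeff_derivative, h1]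
  ring

end PS1

section Abel
open Finset Polynomial


lemma alt_pascal (n : ℕ) (a : ℕ → ℚ) :
    ∑ k ∈ range (n+2), (-1:ℚ)^k * ((n+1).choose k) * a k
      = ∑ k ∈ range (n+1), (-1:ℚ)^k * (n.choose k) * (a k - a (k+1)) := by
  rw [Finset.sum_range_succ']
  have h1 : ∀ k, (-1:ℚ)^(k+1) * ((n+1).choose (k+1)) * a (k+1)
      = (-1:ℚ)^(k+1) * (n.choose k) * a (k+1) + (-1:ℚ)^(k+1) * (n.choose (k+1)) * a (k+1) := by
    intro k
    rw [Nat.choose_succ_succ]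
    push_cast
    ring
  rw [Finset.sum_congr rfl fun k _ => h1 k, Finset.sum_add_distrib]
  have h2 : ∑ k ∈ range (n+1), (-1:ℚ)^(k+1) * (n.choose (k+1)) * a (k+1)
      = ∑ k ∈ range (n+2), (-1:ℚ)^k * (n.choose k) * a k - a 0 := by
    rw [Finset.sum_range_succ' (fun k => (-1:ℚ)^k * (n.choose k) * a k) (n+1)]
    simp
  rw [h2, Finset.sum_range_succ (fun k => (-1:ℚ)^k * (n.choose k) * a k) (n+1)]
  rw [Nat.choose_succ_self]
  have h3 : ∀ k ∈ range (n+1), (-1:ℚ)^(k+1) * (n.choose k) * a (k+1)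
      = -((-1:ℚ)^k * (n.choose k) * a (k+1)) := fun k _ => by ring
  have h4 : ∀ k ∈ range (n+1), (-1:ℚ)^k * (n.choose k) * (a k - a (k+1))
      = (-1:ℚ)^k * (n.choose k) * a k - (-1:ℚ)^k * (n.choose k) * a (k+1) := fun k _ => by ring
  rw [Finset.sum_congr rfl h3, Finset.sum_congr rfl h4, Finset.sum_sub_distrib, Finset.sum_neg_distrib]
  simp
  ring

lemma findiff : ∀ n : ℕ, ∀ m, m < n → ∀ z : ℚ,
    ∑ k ∈ range (n+1), (-1:ℚ)^k * (n.choose k) * (z + k)^m = 0 := by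
  intro n
  induction n with
  | zero => intro m hm; omega
  | succ n ih =>
    intro m hm z
    rw [alt_pascal n (fun k => (z + (k:ℚ))^m)]
    have expand : ∀ k : ℕ, (z+(k:ℚ))^m - (z+((k+1:ℕ):ℚ))^m
        = -∑ i ∈ range m, (z+(k:ℚ))^i * (m.choose i) := by
      intro k
      have h : (z+((k+1:ℕ):ℚ)) = ((z+(k:ℚ))+1) := by push_cast; ring
      have hb : ((z+(k:ℚ))+1)^m = (∑ i ∈ range m, (z+(k:ℚ))^i * (m.choose i)) + (z+(k:ℚ))^m := by
        rw [add_pow, Finset.sum_range_succ]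
        simp
      rw [h, hb]
      ring
    have h1 : ∀ k ∈ range (n+1), (-1:ℚ)^k * (n.choose k) * ((z+(k:ℚ))^m - (z+((k+1:ℕ):ℚ))^m)
        = ∑ i ∈ range m, (m.choose i : ℚ) * -((-1:ℚ)^k * (n.choose k) * (z+(k:ℚ))^i) := by
      intro k _
      rw [expand k, mul_neg, Finset.mul_sum, ← Finset.sum_neg_distrib]
      exact Finset.sum_congr rfl fun i _ => by ring
    rw [Finset.sum_congr rfl h1, Finset.sum_comm]
    apply Finset.sum_eq_zero
    intro i hi
    rw [mem_range] at hi
    rw [← Finset.mul_sum]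
    have h2 : ∑ k ∈ range (n+1), -((-1:ℚ)^k * (n.choose k) * (z+(k:ℚ))^i) = 0 := by
      rw [Finset.sum_neg_distrib, ih i (by omega) z, neg_zero]
    rw [h2, mul_zero]


lemma findiff' (n m : ℕ) (hm : m < n) (z : ℚ) :
    ∑ k ∈ range (n+1), (-1:ℚ)^k * (n.choose k) * (z + ((n-k:ℕ):ℚ))^m = 0 := by
  have hre := Finset.sum_range_reflect (fun j => (-1:ℚ)^j * (n.choose j) * (z + (j:ℚ))^m) (n+1)
  simp only [Nat.add_sub_cancel] at hre
  have hterm : ∀ k ∈ range (n+1), (-1:ℚ)^k * (n.choose k) * (z + ((n-k:ℕ):ℚ))^m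
      = (-1:ℚ)^n * ((-1:ℚ)^(n-k) * (n.choose (n-k) : ℚ) * (z + ((n-k:ℕ):ℚ))^m) := by
    intro k hk
    rw [mem_range] at hk
    have e2 : n.choose (n-k) = n.choose k := Nat.choose_symm (by omega)
    have h7 : (n-k)+k = n := by omega
    have e3 : (-1:ℚ)^n = (-1:ℚ)^(n-k) * (-1:ℚ)^k := by rw [← pow_add, h7]
    have hsq2 : ((-1:ℚ)^(n-k))*((-1:ℚ)^(n-k)) = 1 := by
      rw [← pow_add, ← two_mul, pow_mul]
      norm_num
    rw [e2, e3]
    linear_combination (-((n.choose k : ℚ) * (z + ((n-k:ℕ):ℚ))^m * (-1:ℚ)^k)) * hsq2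
  rw [Finset.sum_congr rfl hterm, ← Finset.mul_sum, hre, findiff n m hm z, mul_zero]

noncomputable def aby (y : ℚ) (m : ℕ) : ℚ := if m = 0 then 1 else y * (y + m)^(m-1)

lemma abel_poly : ∀ n : ℕ, ∀ c y : ℚ,
    ∑ k ∈ range (n+1), Polynomial.C ((n.choose k : ℚ) * aby y (n-k)) * (X + Polynomial.C (c + k))^k
      = (X + Polynomial.C (c + y + n))^n := by
  intro n
  induction n with
  | zero => intro c y; simp [aby]
  | succ n ih =>
    intro c y
    set L : ℚ[X] := ∑ k ∈ range (n+1+1),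
      Polynomial.C (((n+1).choose k : ℚ) * aby y (n+1-k)) * (X + Polynomial.C (c + k))^k with hL
    set R : ℚ[X] := (X + Polynomial.C (c + y + (n+1:ℕ)))^(n+1) with hR
    -- derivative equality
    have hd : derivative L = derivative R := by
      rw [hL, hR, derivative_sum]
      have h1 : ∀ k, derivative (Polynomial.C (((n+1).choose k : ℚ) * aby y (n+1-k)) * (X + Polynomial.C (c + k))^k)
          = Polynomial.C (((n+1).choose k : ℚ) * aby y (n+1-k)) * (Polynomial.C ((k:ℕ):ℚ) * (X + Polynomial.C (c + k))^(k-1) * derivative (X + Polynomial.C (c+(k:ℚ)))) := by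
        intro k
        rw [derivative_C_mul, derivative_pow]
      rw [Finset.sum_congr rfl fun k _ => h1 k, Finset.sum_range_succ']
      simp only [Nat.cast_zero, map_zero, zero_mul, mul_zero, add_zero]
      have h2 : ∀ k, Polynomial.C (((n+1).choose (k+1) : ℚ) * aby y (n+1-(k+1))) * (Polynomial.C (((k+1:ℕ)):ℚ) * (X + Polynomial.C (c + ((k+1:ℕ):ℚ)))^(k+1-1) * derivative (X + Polynomial.C (c+((k+1:ℕ):ℚ))))
          = Polynomial.C (((n+1):ℚ)) * (Polynomial.C ((n.choose k : ℚ) * aby y (n-k)) * (X + Polynomial.C ((c+1) + k))^k) := by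
        intro k
        have hch : ((n+1).choose (k+1) : ℚ) * ((k+1:ℕ):ℚ) = ((n+1):ℚ) * (n.choose k) := by
          exact_mod_cast (Nat.add_one_mul_choose_eq n k).symm
        have harg : c + ((k+1:ℕ):ℚ) = (c+1) + (k:ℚ) := by push_cast; ring
        rw [Nat.add_sub_cancel, harg, Nat.succ_sub_succ, derivative_X_add_C, mul_one]
        rw [← mul_assoc, ← map_mul, ← mul_assoc, ← map_mul]
        congr 1
        rw [Polynomial.C_inj]
        push_cast at hch ⊢
        linear_combination (aby y (n-k)) * hch
      rw [Finset.sum_congr rfl fun k _ => h2 k, ← Finset.mul_sum, ih (c+1) y]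
      rw [derivative_pow, derivative_X_add_C, mul_one, Nat.add_sub_cancel]
      have harg2 : (c+1+y+(n:ℚ)) = c + y + ((n+1:ℕ):ℚ) := by push_cast; ring
      rw [harg2]
      congr 1
      norm_cast
    -- evaluation
    have hevalR : Polynomial.eval (-(c + y + ((n+1:ℕ):ℚ))) R = 0 := by
      rw [hR]
      simp only [Polynomial.eval_pow, Polynomial.eval_add, Polynomial.eval_X, Polynomial.eval_C]
      rw [show -(c + y + ((n+1:ℕ):ℚ)) + (c + y + ((n+1:ℕ):ℚ)) = 0 by ring]
      exact zero_pow (by omega)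
    have hevalL : Polynomial.eval (-(c + y + ((n+1:ℕ):ℚ))) L = 0 := by
      rw [hL, Polynomial.eval_finset_sum]
      have h3 : ∀ k ∈ range (n+1+1),
          Polynomial.eval (-(c + y + ((n+1:ℕ):ℚ)))
            (Polynomial.C (((n+1).choose k : ℚ) * aby y (n+1-k)) * (X + Polynomial.C (c + k))^k)
          = y * ((-1:ℚ)^k * (((n+1).choose k : ℚ)) * ((y + ((n+1-k:ℕ):ℚ))^n)) := by
        intro k hk
        rw [mem_range] at hk
        rw [Polynomial.eval_mul, Polynomial.eval_C, Polynomial.eval_pow, Polynomial.eval_add,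
          Polynomial.eval_X, Polynomial.eval_C]
        have hbase : -(c + y + ((n+1:ℕ):ℚ)) + (c + (k:ℚ)) = -(y + ((n+1-k:ℕ):ℚ)) := by
          push_cast [Nat.cast_sub (by omega : k ≤ n+1)]
          ring
        rw [hbase, neg_pow]
        by_cases hkn : k = n+1
        · subst hkn
          rw [Nat.sub_self]
          norm_num [aby, pow_succ]
          ring
        · have hm0 : n+1-k ≠ 0 := by omega
          rw [aby, if_neg hm0]
          have hpow : (y + ((n+1-k:ℕ):ℚ))^(n+1-k-1) * (y + ((n+1-k:ℕ):ℚ))^k = (y + ((n+1-k:ℕ):ℚ))^n := by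
            rw [← pow_add]
            congr 1
            omega
          rw [← hpow]
          ring
      rw [Finset.sum_congr rfl h3, ← Finset.mul_sum]
      rw [findiff' (n+1) n (by omega) y, mul_zero]
    -- conclusion
    have hsub : L - R = Polynomial.C ((L-R).coeff 0) :=
      Polynomial.eq_C_of_natDegree_eq_zero
        (Polynomial.natDegree_eq_zero_of_derivative_eq_zero (by rw [derivative_sub, hd, sub_self]))
    have hz : (L-R).eval (-(c + y + ((n+1:ℕ):ℚ))) = 0 := by
      rw [Polynomial.eval_sub, hevalL, hevalR, sub_self]
    rw [hsub, Polynomial.eval_C] at hz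
    have hLR : L - R = 0 := by rw [hsub, hz, map_zero]
    exact sub_eq_zero.mp hLR

lemma S_eq (n : ℕ) :
    ∑ j ∈ range n, (n.choose j : ℚ) * ((j:ℚ)+1)^j * (((n-1-j:ℕ)):ℚ)^(n-1-j)
      = ((n:ℚ)+1)^n - (n:ℚ)^n := by
  have h := congrArg (Polynomial.eval (1:ℚ)) (abel_poly n 0 (-1))
  rw [Polynomial.eval_finset_sum] at h
  simp only [Polynomial.eval_mul, Polynomial.eval_pow, Polynomial.eval_add, Polynomial.eval_X,
    Polynomial.eval_C] at h
  rw [Finset.sum_range_succ] at h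
  have hlast : ((n.choose n : ℚ) * aby (-1) (n-n)) * ((1:ℚ) + (0 + (n:ℚ)))^n = ((n:ℚ)+1)^n := by
    rw [Nat.sub_self, Nat.choose_self]
    simp [aby]
    ring_nf
  rw [hlast] at h
  rw [show (1:ℚ) + (0 + -1 + (n:ℚ)) = (n:ℚ) by ring] at h
  have hterm : ∀ k ∈ range n, ((n.choose k:ℚ) * aby (-1) (n-k)) * ((1:ℚ) + (0 + (k:ℚ)))^k
      = -((n.choose k : ℚ) * ((k:ℚ)+1)^k * (((n-1-k:ℕ)):ℚ)^(n-1-k)) := by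
    intro k hk
    rw [mem_range] at hk
    rw [aby, if_neg (by omega : ¬(n-k=0))]
    have e1 : (-1:ℚ) + ((n-k:ℕ):ℚ) = ((n-1-k:ℕ):ℚ) := by
      have e0 : (n-k) = (n-1-k)+1 := by omega
      rw [e0]
      push_cast
      ring
    have e2 : n-k-1 = n-1-k := by omega
    rw [e1, e2]
    ring
  rw [Finset.sum_congr rfl hterm, Finset.sum_neg_distrib] at h
  linarith [h]

def eW (m : ℕ) : ℚ := (-1:ℚ)^(m-1) * ((m:ℚ)-1)^(m-1)

lemma key (n : ℕ) :
    ∑ j ∈ range (n+1), (n.choose j : ℚ) * ((-1:ℚ)^j * ((j:ℚ)+1)^j) * eW (n-j)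
      = (-1:ℚ)^n * (n:ℚ)^n := by
  rcases Nat.eq_zero_or_pos n with h0 | hpos
  · subst h0; simp [eW]
  rw [Finset.sum_range_succ, Nat.sub_self, Nat.choose_self]
  have he0 : eW 0 = 1 := by simp [eW]
  rw [he0]
  have hterm : ∀ j ∈ range n, (n.choose j : ℚ) * ((-1:ℚ)^j * ((j:ℚ)+1)^j) * eW (n-j)
      = (-1:ℚ)^(n-1) * ((n.choose j : ℚ) * ((j:ℚ)+1)^j * (((n-1-j:ℕ)):ℚ)^(n-1-j)) := by
    intro j hj
    rw [mem_range] at hj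
    rw [eW]
    have e1 : ((n-j:ℕ):ℚ) - 1 = ((n-1-j:ℕ):ℚ) := by
      have e0 : (n-j) = (n-1-j)+1 := by omega
      rw [e0]; push_cast; ring
    have e2 : n-j-1 = n-1-j := by omega
    rw [e1, e2]
    have e3 : (-1:ℚ)^j * (-1:ℚ)^(n-1-j) = (-1:ℚ)^(n-1) := by
      rw [← pow_add]; congr 1; omega
    linear_combination ((n.choose j:ℚ) * ((j:ℚ)+1)^j * (((n-1-j:ℕ)):ℚ)^(n-1-j)) * e3
  rw [Finset.sum_congr rfl hterm, ← Finset.mul_sum, S_eq n]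
  have e4 : (-1:ℚ)^n = -(-1:ℚ)^(n-1) := by
    have h5 : (-1:ℚ)^((n-1)+1) = -(-1:ℚ)^(n-1) := by rw [pow_succ]; ring
    rw [Nat.sub_add_cancel hpos] at h5
    exact h5
  rw [e4]
  push_cast
  ring

end Abel

section Main
open PowerSeries Finset

lemma coeff_master : ∀ n : ℕ, coeff n (psubst SW (exp ℚ)) = eW n / n.factorial := by
  intro n
  induction n using Nat.strong_induction_on with
  | _ n ih =>
    match n, ih with
    | 0, _ =>
      rw [coeff_psubst_exp]
      simp [eW]
    | (m+1), ih =>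
      have hrec := c_rec m
      have hterm : ∀ j ∈ range (m+1),
          (coeff (j+1) SW * ((j:ℚ)+1)) * coeff (m-j) (psubst SW (exp ℚ))
          = (m.factorial:ℚ)⁻¹ * ((m.choose j : ℚ) * ((-1:ℚ)^j * ((j:ℚ)+1)^j) * eW (m-j)) := by
        intro j hj
        rw [Finset.mem_range] at hj
        have hSW : coeff (j+1) SW = (-1:ℚ)^j * ((j:ℚ)+1)^j / ((j+1).factorial : ℚ) := by
          rw [SW, coeff_mk, if_neg (by omega : ¬(j+1=0)), Nat.add_sub_cancel]
          push_cast
          ring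
        rw [hSW, ih (m-j) (by omega), Nat.cast_choose ℚ (by omega : j ≤ m), Nat.factorial_succ]
        have h1 : ((j.factorial:ℚ)) ≠ 0 := Nat.cast_ne_zero.2 (Nat.factorial_ne_zero j)
        have h2 : (((m-j).factorial:ℚ)) ≠ 0 := Nat.cast_ne_zero.2 (Nat.factorial_ne_zero _)
        have h3 : ((m.factorial:ℚ)) ≠ 0 := Nat.cast_ne_zero.2 (Nat.factorial_ne_zero m)
        have h4 : ((j:ℚ)+1) ≠ 0 := by positivity
        push_cast
        field_simp
      rw [Finset.sum_congr rfl hterm, ← Finset.mul_sum, key m] at hrec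
      have hm1 : ((m:ℚ)+1) ≠ 0 := by positivity
      have h3 : ((m.factorial:ℚ)) ≠ 0 := Nat.cast_ne_zero.2 (Nat.factorial_ne_zero m)
      have heW : eW (m+1) = (-1:ℚ)^m * (m:ℚ)^m := by
        rw [eW, Nat.add_sub_cancel]
        push_cast
        ring
      rw [heW, Nat.factorial_succ]
      push_cast
      field_simp at hrec ⊢
      linarith [hrec]

theorem exp_SW_sub :
    psubst SW (PowerSeries.exp ℚ) - PowerSeries.X - 1
      = PowerSeries.mk (fun n =>
          if n < 2 then 0 else (-1) ^ (n - 1) * ((n : ℚ) - 1) ^ (n - 1) / n.factorial) ∧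
    PowerSeries.constantCoeff (psubst SW (PowerSeries.exp ℚ)) = 1 ∧
    PowerSeries.coeff 1 (psubst SW (PowerSeries.exp ℚ)) = 1 ∧
    ∀ n : ℕ, 2 ≤ n →
      PowerSeries.coeff n (psubst SW (PowerSeries.exp ℚ))
        = (-1) ^ (n - 1) * ((n : ℚ) - 1) ^ (n - 1) / n.factorial := by
  have h0 : constantCoeff (psubst SW (exp ℚ)) = 1 := by
    rw [← coeff_zero_eq_constantCoeff, coeff_master 0]
    simp [eW]
  have h1 : coeff 1 (psubst SW (exp ℚ)) = 1 := by
    rw [coeff_master 1]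
    simp [eW]
  have hn : ∀ n : ℕ, 2 ≤ n → coeff n (psubst SW (exp ℚ))
      = (-1) ^ (n - 1) * ((n : ℚ) - 1) ^ (n - 1) / n.factorial := by
    intro n _
    rw [coeff_master n, eW]
  refine ⟨?_, h0, h1, hn⟩
  ext n
  rw [map_sub, map_sub, coeff_mk, coeff_X, coeff_one]
  by_cases hn0 : n = 0
  · subst hn0
    rw [coeff_master 0]
    simp [eW]
  by_cases hn1 : n = 1
  · subst hn1
    rw [coeff_master 1]
    simp [eW]
  · rw [if_neg hn1, if_neg hn0, if_neg (by omega : ¬ n < 2), coeff_master n, eW, sub_zero, sub_zero]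

end Main
end

section
/- Let C_{−1} = x + Σ_{n≥2} (−1)^n (n−1)^{n−2} x^n/n! ∈ ℚ[[x]]. Then (C_{−1} − x) ∘ (x·e^x) = Σ_{n≥2} (n−1)^2 x^n/n!; that is, substituting x·e^x into C_{−1} − x yields the exponential generating series whose n-th coefficient is (n−1)^2/n! for n ≥ 2 and 0 otherwise. -/
/-- `C₋₁ = x + Σ_{n≥2} (-1)ⁿ (n-1)^(n-2) xⁿ/n!`. -/
noncomputable def Cm1 : PowerSeries ℚ :=
  PowerSeries.X + PowerSeries.mk (fun n =>
    if n < 2 then 0 else (-1) ^ n * ((n : ℚ) - 1) ^ (n - 2) / n.factorial)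

section Aux

open Finset

/-- Finite differences: `∑ (-1)^k C(m,k) k^d = 0` for `d < m`. -/
lemma alt_diff : ∀ d m : ℕ, d < m →
    ∑ k ∈ range (m + 1), (-1 : ℚ) ^ k * m.choose k * (k : ℚ) ^ d = 0 := by
  intro d
  induction d using Nat.strong_induction_on with
  | _ d ih =>
    intro m hm
    match d, m, hm with
    | 0, m, hm =>
      have h := Int.alternating_sum_range_choose_of_ne (Nat.zero_lt_of_lt hm).ne'
      have h2 : ((∑ k ∈ range (m + 1), ((-1) ^ k * m.choose k : ℤ) : ℤ) : ℚ) = 0 := by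
        rw [h]; norm_num
      push_cast at h2
      simpa using h2
    | d + 1, M + 1, hm =>
      have hdM : d < M := by omega
      rw [Finset.sum_range_succ']
      have h0 : (((0 : ℕ) : ℚ)) ^ (d + 1) = 0 := by norm_num
      rw [h0, mul_zero, add_zero]
      have hstep : ∀ j ∈ range (M + 1),
          (-1 : ℚ) ^ (j + 1) * (M + 1).choose (j + 1) * ((j + 1 : ℕ) : ℚ) ^ (d + 1)
            = -((M : ℚ) + 1) * ((-1 : ℚ) ^ j * M.choose j * ((j : ℚ) + 1) ^ d) := by
        intro j hj
        have hc : (((M + 1).choose (j + 1) : ℕ) : ℚ) * ((j : ℚ) + 1)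
            = ((M : ℚ) + 1) * M.choose j := by
          have h := (Nat.add_one_mul_choose_eq M j).symm
          have h2 : (((M + 1).choose (j + 1) * (j + 1) : ℕ) : ℚ)
              = (((M + 1) * M.choose j : ℕ) : ℚ) := by rw [h]
          push_cast at h2
          linarith [h2]
        push_cast
        rw [pow_succ (-1:ℚ) j, pow_succ ((j:ℚ)+1) d]
        linear_combination (-(-1:ℚ)^j * ((j:ℚ)+1)^d) * hc
      rw [Finset.sum_congr rfl hstep, ← Finset.mul_sum]
      have hinner : ∑ j ∈ range (M + 1),
          (-1 : ℚ) ^ j * M.choose j * ((j : ℚ) + 1) ^ d = 0 := by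
        have hexp : ∀ j ∈ range (M + 1),
            (-1 : ℚ) ^ j * M.choose j * ((j : ℚ) + 1) ^ d
              = ∑ i ∈ range (d + 1),
                  (d.choose i : ℚ) * ((-1 : ℚ) ^ j * M.choose j * (j : ℚ) ^ i) := by
          intro j hj
          rw [add_pow]
          rw [Finset.mul_sum]
          refine Finset.sum_congr rfl fun i hi => by ring
        rw [Finset.sum_congr rfl hexp, Finset.sum_comm]
        refine Finset.sum_eq_zero fun i hi => ?_
        rw [← Finset.mul_sum,
          ih i (mem_range.mp hi) M (lt_of_le_of_lt (Nat.lt_succ_iff.mp (mem_range.mp hi)) hdM),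
          mul_zero]
      rw [hinner, mul_zero]

lemma binom1 (N x : ℕ) : ∑ j ∈ range (N + 1), N.choose j * (x + 1) ^ (N - j) = (x + 2) ^ N := by
  have h := add_pow 1 (x + 1) N
  simp only [one_pow, one_mul] at h
  have : (1 + (x + 1)) = x + 2 := by ring
  rw [this] at h
  rw [h]
  exact Finset.sum_congr rfl fun j hj => by push_cast; ring

lemma binom2 (M x : ℕ) :
    ∑ j ∈ range (M + 2), j * (M + 1).choose j * (x + 1) ^ (M + 1 - j)
      = (M + 1) * (x + 2) ^ M := by
  rw [Finset.sum_range_succ']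
  simp only [zero_mul, Nat.cast_zero, add_zero]
  have hstep : ∀ i ∈ range (M + 1),
      (i + 1) * (M + 1).choose (i + 1) * (x + 1) ^ (M + 1 - (i + 1))
        = (M + 1) * (M.choose i * (x + 1) ^ (M - i)) := by
    intro i hi
    have h := (Nat.add_one_mul_choose_eq M i).symm
    have h2 : M + 1 - (i + 1) = M - i := by omega
    rw [h2]
    calc (i + 1) * (M + 1).choose (i + 1) * (x + 1) ^ (M - i)
        = ((M + 1).choose (i + 1) * (i + 1)) * (x + 1) ^ (M - i) := by ring
      _ = ((M + 1) * M.choose i) * (x + 1) ^ (M - i) := by rw [← h]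
      _ = (M + 1) * (M.choose i * (x + 1) ^ (M - i)) := by ring
  rw [Finset.sum_congr rfl hstep, ← Finset.mul_sum, binom1]

lemma perk (N x : ℕ) :
    (x + 2) * ∑ j ∈ range (N + 1), (j + 1) * N.choose j * (x + 1) ^ (N - j)
      = (N + x + 2) * (x + 2) ^ N := by
  cases N with
  | zero => simp
  | succ M =>
    have hsplit : ∑ j ∈ range (M + 2), (j + 1) * (M + 1).choose j * (x + 1) ^ (M + 1 - j)
        = (∑ j ∈ range (M + 2), j * (M + 1).choose j * (x + 1) ^ (M + 1 - j))
          + ∑ j ∈ range (M + 2), (M + 1).choose j * (x + 1) ^ (M + 1 - j) := by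
      rw [← Finset.sum_add_distrib]
      exact Finset.sum_congr rfl fun j hj => by ring
    rw [hsplit, binom2, binom1]
    ring

/-- `∑_{l=0}^{M} (-1)^l (l+1)^M / ((l+1)! (M-l)!) = 0` for `M ≥ 1`. -/
lemma inner_zero (M : ℕ) (hM : 1 ≤ M) :
    ∑ l ∈ range (M + 1),
      (-1 : ℚ) ^ l * ((l : ℚ) + 1) ^ M / ((l + 1).factorial * (M - l).factorial) = 0 := by
  have h := alt_diff M (M + 1) (Nat.lt_succ_self M)
  rw [Finset.sum_range_succ'] at h
  have h0 : (-1 : ℚ) ^ 0 * ((M + 1).choose 0 : ℚ) * ((0 : ℕ) : ℚ) ^ M = 0 := by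
    have hM0 : M ≠ 0 := by omega
    simp [zero_pow hM0]
  rw [h0, add_zero] at h
  have key : ∀ l ∈ range (M + 1),
      (-1 : ℚ) ^ l * ((l : ℚ) + 1) ^ M / ((l + 1).factorial * (M - l).factorial)
        = (-(1 : ℚ) / (M + 1).factorial) *
            ((-1 : ℚ) ^ (l + 1) * ((M + 1).choose (l + 1) : ℚ) * ((l + 1 : ℕ) : ℚ) ^ M) := by
    intro l hl
    have hl' : l + 1 ≤ M + 1 := by have := mem_range.mp hl; omega
    have hc : (((M + 1).choose (l + 1) : ℕ) : ℚ)
        = ((M + 1).factorial : ℚ) / ((l + 1).factorial * ((M + 1) - (l + 1)).factorial) :=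
      Nat.cast_choose ℚ hl'
    have h2 : (M + 1) - (l + 1) = M - l := by omega
    rw [h2] at hc
    have hf1 : ((l + 1).factorial : ℚ) ≠ 0 := Nat.cast_ne_zero.2 (Nat.factorial_ne_zero _)
    have hf2 : ((M - l).factorial : ℚ) ≠ 0 := Nat.cast_ne_zero.2 (Nat.factorial_ne_zero _)
    have hf3 : ((M + 1).factorial : ℚ) ≠ 0 := Nat.cast_ne_zero.2 (Nat.factorial_ne_zero _)
    rw [hc, pow_succ (-1 : ℚ) l]
    push_cast
    field_simp
  rw [Finset.sum_congr rfl key, ← Finset.mul_sum, h, mul_zero]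

/-- The coefficient of `xⁿ` in `(x·eˣ)^k`. -/
lemma coeff_pow_Xexp (n k : ℕ) :
    PowerSeries.coeff n ((PowerSeries.X * PowerSeries.exp ℚ) ^ k)
      = if k ≤ n then (k : ℚ) ^ (n - k) / (n - k).factorial else 0 := by
  rw [mul_pow, PowerSeries.coeff_X_pow_mul', PowerSeries.exp_pow_eq_rescale_exp]
  split_ifs with h
  · rw [PowerSeries.coeff_rescale, PowerSeries.coeff_exp]
    simp [div_eq_mul_inv]
  · rfl

/-- The key sum identity. -/
lemma main_sum (e : ℕ) :
    ∑ l ∈ range (e + 1),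
      (-1 : ℚ) ^ l * ((l : ℚ) + 1) ^ l / ((l + 2).factorial)
        * (((l : ℚ) + 2) ^ (e - l) / ((e - l).factorial))
      = ((e : ℚ) + 1) ^ 2 / ((e + 2).factorial) := by
  have hfac : ∀ m : ℕ, ((m.factorial : ℕ) : ℚ) ≠ 0 :=
    fun m => Nat.cast_ne_zero.2 (Nat.factorial_ne_zero m)
  have he2 : ((e : ℚ) + 2) ≠ 0 := by positivity
  -- the double-sum summand
  set F : ℕ → ℕ → ℚ := fun l j =>
    (-1 : ℚ) ^ l * ((l : ℚ) + 1) ^ (e - j) / ((l + 1).factorial * (e - j - l).factorial)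
      * (((j : ℚ) + 1) / j.factorial) / ((e : ℚ) + 2) with hF
  -- Step 1: expand each term into a sum over j
  have step1 : ∀ l ∈ range (e + 1),
      (-1 : ℚ) ^ l * ((l : ℚ) + 1) ^ l / ((l + 2).factorial)
          * (((l : ℚ) + 2) ^ (e - l) / ((e - l).factorial))
        = ∑ j ∈ range (e - l + 1), F l j := by
    intro l hl
    have hle : l ≤ e := by have := mem_range.mp hl; omega
    -- the cast perk identity
    have hperk := perk (e - l) l
    rw [show e - l + l + 2 = e + 2 by omega] at hperk
    have hq : ((l : ℚ) + 2) * (∑ j ∈ range (e - l + 1),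
          ((j : ℚ) + 1) * ((e - l).choose j : ℚ) * ((l : ℚ) + 1) ^ (e - l - j))
        = ((e : ℚ) + 2) * ((l : ℚ) + 2) ^ (e - l) := by
      have := congrArg (Nat.cast : ℕ → ℚ) hperk
      push_cast at this
      convert this using 2
    -- absorb F into c l * (choose form)
    have hterm : ∀ j ∈ range (e - l + 1), F l j
        = ((-1 : ℚ) ^ l * ((l : ℚ) + 1) ^ l
            / (((l + 1).factorial : ℚ) * ((e - l).factorial : ℚ) * ((e : ℚ) + 2)))
          * (((j : ℚ) + 1) * ((e - l).choose j : ℚ) * ((l : ℚ) + 1) ^ (e - l - j)) := by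
      intro j hj
      have hje : j ≤ e - l := by have := mem_range.mp hj; omega
      have hch : (((e - l).choose j : ℕ) : ℚ)
          = ((e - l).factorial : ℚ) / ((j.factorial : ℚ) * (((e - l) - j).factorial : ℚ)) :=
        Nat.cast_choose ℚ hje
      have hpow : ((l : ℚ) + 1) ^ (e - j) = ((l : ℚ) + 1) ^ l * ((l : ℚ) + 1) ^ (e - l - j) := by
        rw [← pow_add]
        congr 1
        omega
      have hsub : e - j - l = e - l - j := by omega
      rw [hF]
      simp only []
      rw [hsub, hch, hpow]
      field_simp
    rw [Finset.sum_congr rfl hterm, ← Finset.mul_sum]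
    -- now use hq
    have h2fac : (((l + 2).factorial : ℕ) : ℚ) = ((l : ℚ) + 2) * ((l + 1).factorial : ℚ) := by
      rw [show l + 2 = (l + 1) + 1 by rfl, Nat.factorial_succ]
      push_cast
      ring
    rw [h2fac]
    have hl2 : ((l : ℚ) + 2) ≠ 0 := by positivity
    have hSum : (∑ j ∈ range (e - l + 1),
          ((j : ℚ) + 1) * ((e - l).choose j : ℚ) * ((l : ℚ) + 1) ^ (e - l - j))
        = ((e : ℚ) + 2) * ((l : ℚ) + 2) ^ (e - l) / ((l : ℚ) + 2) := by
      rw [eq_div_iff hl2]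
      linear_combination hq
    rw [hSum]
    field_simp
  rw [Finset.sum_congr rfl step1]
  -- Step 2: swap the order of summation
  rw [Finset.sum_comm' (t' := range (e + 1)) (s' := fun j => range (e - j + 1))
    (by intro l j; simp only [mem_range]; omega)]
  -- Step 3: inner sums vanish except j = e
  have step3 : ∀ j ∈ range (e + 1), j ≠ e → ∑ l ∈ range (e - j + 1), F l j = 0 := by
    intro j hj hne
    have hM : 1 ≤ e - j := by have := mem_range.mp hj; omega
    have : ∑ l ∈ range (e - j + 1), F l j
        = (∑ l ∈ range ((e - j) + 1),
            (-1 : ℚ) ^ l * ((l : ℚ) + 1) ^ (e - j)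
              / ((l + 1).factorial * ((e - j) - l).factorial))
          * ((((j : ℚ) + 1) / j.factorial) / ((e : ℚ) + 2)) := by
      rw [Finset.sum_mul]
      refine Finset.sum_congr rfl fun l hl => ?_
      rw [hF]
      ring
    rw [this, inner_zero _ hM, zero_mul]
  rw [Finset.sum_eq_single_of_mem e (by simp) step3]
  -- evaluate at j = e
  rw [show e - e = 0 by omega]
  rw [Finset.sum_range_one, hF]
  simp only [Nat.sub_zero, Nat.sub_self]
  have h1 : ((e + 2).factorial : ℚ) = ((e : ℚ) + 2) * ((e : ℚ) + 1) * (e.factorial : ℚ) := by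
    rw [show e + 2 = (e + 1) + 1 by rfl, Nat.factorial_succ, Nat.factorial_succ]
    push_cast
    ring
  rw [h1]
  simp only [pow_zero, Nat.factorial_zero, Nat.factorial_one]
  field_simp
  ring

end Aux

theorem Ca0_eq :
    psubst (PowerSeries.X * PowerSeries.exp ℚ) (Cm1 - PowerSeries.X)
      = PowerSeries.mk (fun n => if n < 2 then 0 else ((n : ℚ) - 1) ^ 2 / n.factorial) := by
  have hCm1 : Cm1 - PowerSeries.X = PowerSeries.mk (fun n =>
      if n < 2 then 0 else (-1) ^ n * ((n : ℚ) - 1) ^ (n - 2) / n.factorial) := by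
    rw [Cm1]; ring
  ext n
  rw [psubst, hCm1, PowerSeries.coeff_mk, PowerSeries.coeff_mk]
  simp only [PowerSeries.coeff_mk, coeff_pow_Xexp]
  match n with
  | 0 => simp
  | 1 => simp [Finset.sum_range_succ]
  | (e + 2) =>
    rw [if_neg (by omega)]
    rw [Finset.sum_range_succ', Finset.sum_range_succ']
    rw [if_pos (by omega : (0:ℕ) < 2), if_pos (by omega : (1:ℕ) < 2)]
    simp only [zero_mul, add_zero]
    have hstep : ∀ l ∈ Finset.range (e + 1),
        (if l + 1 + 1 < 2 then (0:ℚ) else (-1) ^ (l + 1 + 1) * (((l + 1 + 1 : ℕ) : ℚ) - 1)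
            ^ (l + 1 + 1 - 2) / (l + 1 + 1).factorial)
          * (if l + 1 + 1 ≤ e + 2 then ((l + 1 + 1 : ℕ) : ℚ) ^ (e + 2 - (l + 1 + 1))
              / (e + 2 - (l + 1 + 1)).factorial else 0)
        = (-1 : ℚ) ^ l * ((l : ℚ) + 1) ^ l / ((l + 2).factorial)
            * (((l : ℚ) + 2) ^ (e - l) / ((e - l).factorial)) := by
      intro l hl
      have hle : l ≤ e := by have := Finset.mem_range.mp hl; omega
      rw [if_neg (by omega), if_pos (by omega)]
      rw [show l + 1 + 1 - 2 = l by omega, show e + 2 - (l + 1 + 1) = e - l by omega,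
        show l + 1 + 1 = l + 2 by omega]
      have hsign : (-1 : ℚ) ^ (l + 2) = (-1 : ℚ) ^ l := by
        rw [pow_add]; norm_num
      rw [hsign]
      push_cast
      rw [show ((l : ℚ) + 2 - 1) = (l : ℚ) + 1 by ring]
    rw [Finset.sum_congr rfl hstep, main_sum]
    push_cast
    ring
end

section
/- (Dissymmetry principle for hypertrees, counting form.) For every n ≥ 1, h(n) + Σ_{H ∈ HT_n} Σ_{e ∈ E(H)} |e| = n·h(n) + Σ_{H ∈ HT_n} |E(H)|, where h(n) is the number of hypertrees on {1,…,n}, E(H) is the edge set of H, and |e| is the cardinality of the edge e. In other words, the number of hypertrees plus the number of edge-pointed rooted hypertrees (a hypertree with a distinguished edge and a distinguished vertex of that edge) equals the number of rooted hypertrees (a hypertree with a distinguished vertex) plus the number of edge-pointed hypertrees (a hypertree with a distinguished edge). -/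
/-!
Hypertrees on `{1, …, n}` (vertices modelled by `Fin n`), identified with their edge
sets.

STATEMENT (dissymmetry principle, counting form): for every `n ≥ 1`,
`h(n) + Σ_{H} Σ_{e ∈ E(H)} |e| = n·h(n) + Σ_{H} |E(H)|`, i.e. the number of
hypertrees plus the number of edge-pointed rooted hypertrees equals the number of
rooted hypertrees plus the number of edge-pointed hypertrees.
-/

/-- `(V, E)` is a hypergraph: edges are subsets of `V` of cardinality at least `2`. -/
def IsHypergraph {α : Type*} (V : Finset α) (E : Finset (Finset α)) : Prop :=
  (∀ e ∈ E, e ⊆ V) ∧ (∀ e ∈ E, 2 ≤ e.card)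

/-- Incidence between successive entries of a walk. -/
def HAdj {α : Type*} : α ⊕ Finset α → α ⊕ Finset α → Prop
  | Sum.inl v, Sum.inr e => v ∈ e
  | Sum.inr e, Sum.inl v => v ∈ e
  | _, _ => False

/-- `L` is a walk from `d` to `f` in the hypergraph `(V, E)`. -/
def IsWalk {α : Type*} (V : Finset α) (E : Finset (Finset α))
    (L : List (α ⊕ Finset α)) (d f : α ⊕ Finset α) : Prop :=
  L ≠ [] ∧ L.head? = some d ∧ L.getLast? = some f ∧ L.Chain' HAdj ∧
    (∀ v : α, Sum.inl v ∈ L → v ∈ V) ∧ (∀ e : Finset α, Sum.inr e ∈ L → e ∈ E)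

/-- The list of edges occurring in a walk. -/
def walkEdges {α : Type*} (L : List (α ⊕ Finset α)) : List (Finset α) :=
  L.filterMap Sum.getRight?

/-- `(V, E)` is a hypertree. -/
def IsHypertree {α : Type*} (V : Finset α) (E : Finset (Finset α)) : Prop :=
  IsHypergraph V E ∧ V.Nonempty ∧
    ∀ v ∈ V, ∀ w ∈ V,
      ∃! L : List (α ⊕ Finset α),
        IsWalk V E L (Sum.inl v) (Sum.inl w) ∧ (walkEdges L).Nodup

/-- The hypertrees on `{1, …, n}`, identified with their edge sets. -/
def HT (n : ℕ) : Type :=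
  {E : Finset (Finset (Fin n)) // IsHypertree Finset.univ E}

noncomputable instance (n : ℕ) : Fintype (HT n) := by unfold HT; exact Fintype.ofFinite _


section Aux
open SimpleGraph Finset

instance hadjDec {α : Type*} [DecidableEq α] : ∀ x y : α ⊕ Finset α, Decidable (HAdj x y)
  | Sum.inl _, Sum.inl _ => isFalse id
  | Sum.inl v, Sum.inr e => inferInstanceAs (Decidable (v ∈ e))
  | Sum.inr e, Sum.inl v => inferInstanceAs (Decidable (v ∈ e))
  | Sum.inr _, Sum.inr _ => isFalse id

variable {n : ℕ}

/-- Map from graph vertices (vertex-or-edge) to walk entries. -/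
def fm (E : Finset (Finset (Fin n))) : (Fin n ⊕ {e : Finset (Fin n) // e ∈ E}) → (Fin n ⊕ Finset (Fin n)) :=
  Sum.map id Subtype.val

lemma fm_inj (E : Finset (Finset (Fin n))) : Function.Injective (fm E) := by
  rintro (v|e) (w|f) h <;> simp only [fm, Sum.map_inl, Sum.map_inr, id_eq, Sum.inl.injEq,
    Sum.inr.injEq, reduceCtorEq] at h
  · exact congrArg Sum.inl h
  · exact congrArg Sum.inr (Subtype.ext h)

/-- The bipartite incidence graph of a hypergraph. -/
def BG (E : Finset (Finset (Fin n))) :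
    SimpleGraph (Fin n ⊕ {e : Finset (Fin n) // e ∈ E}) where
  Adj a b := HAdj (fm E a) (fm E b)
  symm := ⟨by rintro (v|e) (w|f) h <;> first | exact h | exact h.elim⟩
  loopless := ⟨by rintro (v|e) h <;> exact h⟩

instance (E : Finset (Finset (Fin n))) : DecidableRel (BG E).Adj :=
  fun a b => inferInstanceAs (Decidable (HAdj _ _))

lemma reach_of_walk (E : Finset (Finset (Fin n))) :
    ∀ (L : List (Fin n ⊕ Finset (Fin n))) (a b : Fin n ⊕ {e : Finset (Fin n) // e ∈ E}),
      IsWalk Finset.univ E L (fm E a) (fm E b) → (BG E).Reachable a b := by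
  intro L
  induction L with
  | nil => rintro a b ⟨h, -⟩; exact absurd rfl h
  | cons x t ih =>
    rintro a b ⟨-, hhd, hlast, hch, hv, he⟩
    have hx : x = fm E a := by simpa using hhd
    cases t with
    | nil =>
      have hb : x = fm E b := by simpa using hlast
      have : a = b := fm_inj E (hx.symm.trans hb)
      exact this ▸ Reachable.refl a
    | cons y r =>
      have hadj : HAdj x y := (List.isChain_cons_cons.mp hch).1
      have hch' : List.Chain' HAdj (y :: r) := (List.isChain_cons_cons.mp hch).2
      have hlast' : (y :: r).getLast? = some (fm E b) := by
        simpa [List.getLast?_cons_cons] using hlast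
      have hsub : ∀ z, z ∈ y :: r → z ∈ x :: y :: r := fun z hz => List.mem_cons_of_mem _ hz
      -- find a' with fm a' = y and Adj a a'
      obtain ⟨a', hfa', hAdj⟩ :
          ∃ a', fm E a' = y ∧ (BG E).Adj a a' := by
        subst hx
        rcases a with v | es
        · rcases y with w | e
          · exact absurd hadj id
          · have heE : e ∈ E := he e (by simp)
            exact ⟨Sum.inr ⟨e, heE⟩, rfl, hadj⟩
        · rcases y with w | e
          · exact ⟨Sum.inl w, rfl, hadj⟩
          · exact absurd hadj id
      have hwalk' : IsWalk Finset.univ E (y :: r) (fm E a') (fm E b) :=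
        ⟨List.cons_ne_nil _ _, by simp [hfa'], hlast', hch',
          fun v hv' => Finset.mem_univ v, fun e he' => he e (hsub _ he')⟩
      exact (hAdj.reachable).trans (ih a' b hwalk')

lemma isWalk_support (E : Finset (Finset (Fin n))) {a b : Fin n ⊕ {e : Finset (Fin n) // e ∈ E}}
    (p : (BG E).Walk a b) :
    IsWalk Finset.univ E (p.support.map (fm E)) (fm E a) (fm E b) := by
  refine ⟨by simp, ?_, ?_, ?_, fun v _ => Finset.mem_univ v, ?_⟩
  · rw [p.support_eq_cons]; rfl
  · have hne : p.support ≠ [] := p.support_ne_nil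
    have hne' : p.support.map (fm E) ≠ [] := by simpa using hne
    rw [List.getLast?_eq_getLast_of_ne_nil hne', List.getLast_map, p.getLast_support]
  · exact List.isChain_map_of_isChain (fm E) (fun a b h => h) p.isChain_adj_support
  · rintro e he'
    obtain ⟨c, hc, hfc⟩ := List.mem_map.mp he'
    rcases c with v | es
    · exact absurd hfc (by simp [fm])
    · have : es.val = e := by simpa [fm] using hfc
      exact this ▸ es.2

lemma acyc (E : Finset (Finset (Fin n))) (hT : IsHypertree Finset.univ E) :
    (BG E).IsAcyclic := by
  intro u c hc
  obtain ⟨v, hv⟩ : ∃ v : Fin n, Sum.inl v ∈ c.support := by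
    cases c with
    | nil => exact absurd hc.three_le_length (by simp)
    | cons h q =>
      rename_i w
      rcases u with v | es
      · exact ⟨v, Walk.start_mem_support _⟩
      · rcases w with w | fs
        · exact ⟨w, by simp⟩
        · exact absurd h id
  set c' := c.rotate (Sum.inl v) hv with hc'def
  have hc' : c'.IsCycle := hc.rotate hv
  set L := c'.support.map (fm E) with hLdef
  have hwalk : IsWalk Finset.univ E L (Sum.inl v) (Sum.inl v) := isWalk_support E c'
  have hnodup : (walkEdges L).Nodup := by
    have hsup : c'.support = Sum.inl v :: c'.support.tail := c'.support_eq_cons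
    have htail : c'.support.tail.Nodup := hc'.2
    have : walkEdges L = c'.support.tail.filterMap (fun z => Sum.getRight? (fm E z)) := by
      rw [hLdef, walkEdges, List.filterMap_map, hsup, List.filterMap_cons_none rfl]
      rfl
    rw [this]
    refine List.Nodup.filterMap ?_ htail
    rintro (x|x) (y|y) e hx hy
    · exact (Option.some_ne_none e (show (none : Option (Finset (Fin n))) = some e from hx).symm).elim
    · exact (Option.some_ne_none e (show (none : Option (Finset (Fin n))) = some e from hx).symm).elim
    · exact (Option.some_ne_none e (show (none : Option (Finset (Fin n))) = some e from hy).symm).elim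
    · have hx' : x.val = e := Option.some.inj hx
      have hy' : y.val = e := Option.some.inj hy
      exact congrArg Sum.inr (Subtype.ext (hx'.trans hy'.symm))
  have huniq := hT.2.2 v (Finset.mem_univ v) v (Finset.mem_univ v)
  have h1 : IsWalk Finset.univ E [Sum.inl v] (Sum.inl v) (Sum.inl v) ∧
      (walkEdges [Sum.inl v]).Nodup := by
    refine ⟨⟨by simp, by simp, by simp, List.isChain_singleton _, ?_, ?_⟩, List.nodup_nil⟩
    · intro w hw; exact Finset.mem_univ w
    · intro e he; simp at he
  have heq : L = [Sum.inl v] := huniq.unique ⟨hwalk, hnodup⟩ h1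
  have hlen : L.length = c'.length + 1 := by
    rw [hLdef, List.length_map, Walk.length_support]
  have h3 : 3 ≤ c'.length := hc'.three_le_length
  rw [heq] at hlen
  have : (1 : ℕ) = c'.length + 1 := by simpa using hlen
  omega

lemma conn (E : Finset (Finset (Fin n))) (hT : IsHypertree Finset.univ E) (hn : 1 ≤ n) :
    (BG E).Connected := by
  have hne : Nonempty (Fin n ⊕ {e : Finset (Fin n) // e ∈ E}) :=
    ⟨Sum.inl ⟨0, hn⟩⟩
  have key : ∀ v w : Fin n, (BG E).Reachable (Sum.inl v) (Sum.inl w) := by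
    intro v w
    obtain ⟨L, ⟨hw, -⟩, -⟩ := hT.2.2 v (Finset.mem_univ v) w (Finset.mem_univ w)
    exact reach_of_walk E L (Sum.inl v) (Sum.inl w) hw
  have key2 : ∀ es : {e : Finset (Fin n) // e ∈ E}, ∃ v, (BG E).Adj (Sum.inr es) (Sum.inl v) := by
    intro es
    obtain ⟨v, hv⟩ := Finset.card_pos.mp (lt_of_lt_of_le two_pos (hT.1.2 es.1 es.2))
    exact ⟨v, hv⟩
  refine Connected.mk ?_
  rintro (v | es) (w | fs)
  · exact key v w
  · obtain ⟨x, hx⟩ := key2 fs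
    exact (key v x).trans hx.symm.reachable
  · obtain ⟨x, hx⟩ := key2 es
    exact hx.reachable.trans (key x w)
  · obtain ⟨x, hx⟩ := key2 es
    obtain ⟨y, hy⟩ := key2 fs
    exact hx.reachable.trans ((key x y).trans hy.symm.reachable)

lemma key_count (E : Finset (Finset (Fin n))) (hT : IsHypertree Finset.univ E) (hn : 1 ≤ n) :
    (∑ e ∈ E, e.card) + 1 = n + E.card := by
  classical
  have htree : (BG E).IsTree := ⟨conn E hT hn, acyc E hT⟩
  have hcardV : Fintype.card (Fin n ⊕ {e : Finset (Fin n) // e ∈ E}) = n + E.card := by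
    simp [Fintype.card_sum]
  have hedge : (BG E).edgeFinset.card + 1 = n + E.card := by
    rw [htree.card_edgeFinset, hcardV]
  have hdeg : ∑ x, (BG E).degree x = 2 * (BG E).edgeFinset.card :=
    SimpleGraph.sum_degrees_eq_twice_card_edges _
  have hdeg' : ∀ x, (BG E).degree x
      = ∑ b, if (BG E).Adj x b then 1 else 0 := by
    intro x
    rw [← SimpleGraph.card_neighborFinset_eq_degree, SimpleGraph.neighborFinset_eq_filter,
      Finset.card_filter]
  have hsum : ∑ x, (BG E).degree x = 2 * ∑ e ∈ E, e.card := by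
    have e1 : ∀ e : Finset (Fin n), (∑ w : Fin n, if w ∈ e then 1 else 0) = e.card := by
      intro e
      rw [← Finset.card_filter]
      congr 1
      exact Finset.filter_univ_mem e
    calc ∑ x, (BG E).degree x
        = ∑ x, ∑ b, if (BG E).Adj x b then 1 else 0 := by
          exact Finset.sum_congr rfl fun x _ => hdeg' x
      _ = (∑ v : Fin n, ∑ b, if (BG E).Adj (Sum.inl v) b then 1 else 0)
          + ∑ es : {e : Finset (Fin n) // e ∈ E}, ∑ b, if (BG E).Adj (Sum.inr es) b then 1 else 0 := by
          rw [Fintype.sum_sum_type]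
      _ = (∑ v : Fin n, ∑ es : {e : Finset (Fin n) // e ∈ E}, if v ∈ es.val then 1 else 0)
          + ∑ es : {e : Finset (Fin n) // e ∈ E}, ∑ w : Fin n, if w ∈ es.val then 1 else 0 := by
          congr 1
          · refine Finset.sum_congr rfl fun v _ => ?_
            rw [Fintype.sum_sum_type]
            have : (∑ w : Fin n, if (BG E).Adj (Sum.inl v) (Sum.inl w) then 1 else 0) = 0 :=
              Finset.sum_eq_zero fun w _ => if_neg (fun h => h)
            rw [this, zero_add]
            exact Finset.sum_congr rfl fun es _ => if_congr Iff.rfl rfl rfl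
          · refine Finset.sum_congr rfl fun es _ => ?_
            rw [Fintype.sum_sum_type]
            have : (∑ fs : {e : Finset (Fin n) // e ∈ E},
                if (BG E).Adj (Sum.inr es) (Sum.inr fs) then 1 else 0) = 0 :=
              Finset.sum_eq_zero fun fs _ => if_neg (fun h => h)
            rw [this, add_zero]
            exact Finset.sum_congr rfl fun w _ => if_congr Iff.rfl rfl rfl
      _ = (∑ es : {e : Finset (Fin n) // e ∈ E}, es.val.card)
          + ∑ es : {e : Finset (Fin n) // e ∈ E}, es.val.card := by
          rw [Finset.sum_comm]
          congr 1 <;> exact Finset.sum_congr rfl fun es _ => e1 es.val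
      _ = 2 * ∑ e ∈ E, e.card := by
          rw [two_mul]
          congr 1 <;>
          · rw [← Finset.sum_coe_sort E (fun e => e.card)]
  rw [hsum] at hdeg
  omega

end Aux

/-- Dissymmetry principle for hypertrees: hypertrees plus edge-pointed rooted
hypertrees are equinumerous with rooted hypertrees plus edge-pointed hypertrees. -/
theorem hypertree_dissymmetry (n : ℕ) (hn : 1 ≤ n) :
    Fintype.card (HT n) + ∑ H : HT n, ∑ e ∈ H.val, e.card
      = n * Fintype.card (HT n) + ∑ H : HT n, H.val.card := by
  classical
  have h1 : ∀ H : HT n, (1 : ℕ) + ∑ e ∈ H.val, e.card = n + H.val.card := by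
    intro H
    have := key_count H.val H.2 hn
    omega
  calc Fintype.card (HT n) + ∑ H : HT n, ∑ e ∈ H.val, e.card
      = ∑ H : HT n, (1 + ∑ e ∈ H.val, e.card) := by
        rw [Finset.sum_add_distrib, Finset.sum_const, smul_eq_mul, mul_one, Finset.card_univ]
    _ = ∑ H : HT n, (n + H.val.card) := Finset.sum_congr rfl fun H _ => h1 H
    _ = n * Fintype.card (HT n) + ∑ H : HT n, H.val.card := by
        rw [Finset.sum_add_distrib, Finset.sum_const, smul_eq_mul, Finset.card_univ, mul_comm]
end
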